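/- arXiv:1804.09021 — 4 statements merged into one kernel-verified Lean document; each statement's English description precedes it below -/
import Mathlib

section
/- Let Y be a nonempty finite type and let f, g : Y → ℝ be two score functions with |f(y) − g(y)| ≤ ε for every y ∈ Y, where ε ≥ 0. Let p_f and p_g be the associated softmax distributions, p_f(y) = exp(f(y)) / ∑_{y'} exp(f(y')) and p_g(y) = exp(g(y)) / ∑_{y'} exp(g(y')). Then the cross-entropy of p_g relative to p_f is bounded by the Shannon entropy of p_f plus 2ε: −∑_{y ∈ Y} p_f(y) · log p_g(y) ≤ H(p_f) + 2ε, where H(p_f) = −∑_{y ∈ Y} p_f(y) · log p_f(y). -/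
open Finset

/-- The softmax distribution associated to a score function `f : Y → ℝ`. -/
noncomputable def softmax {Y : Type*} [Fintype Y] (f : Y → ℝ) (y : Y) : ℝ :=
  Real.exp (f y) / ∑ y' : Y, Real.exp (f y')

/-- If two score functions `f, g` satisfy `|f y - g y| ≤ ε` for all `y`, then the
cross-entropy of the softmax of `g` relative to the softmax of `f` is bounded by the
Shannon entropy of the softmax of `f` plus `2 ε`. -/
theorem crossEntropy_le_entropy_add_two_eps {Y : Type*} [Fintype Y] [Nonempty Y]
    (f g : Y → ℝ) (ε : ℝ) (hε : 0 ≤ ε) (h : ∀ y : Y, |f y - g y| ≤ ε) :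
    -∑ y : Y, softmax f y * Real.log (softmax g y) ≤
      (-∑ y : Y, softmax f y * Real.log (softmax f y)) + 2 * ε := by
  set Sf := ∑ y' : Y, Real.exp (f y') with hSf
  set Sg := ∑ y' : Y, Real.exp (g y') with hSg
  have hSfpos : 0 < Sf := Finset.sum_pos (fun y _ => Real.exp_pos _) univ_nonempty
  have hSgpos : 0 < Sg := Finset.sum_pos (fun y _ => Real.exp_pos _) univ_nonempty
  have hpf : ∀ y, softmax f y = Real.exp (f y) / Sf := fun y => rfl
  have hlogf : ∀ y, Real.log (softmax f y) = f y - Real.log Sf := by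
    intro y
    rw [hpf, Real.log_div (Real.exp_ne_zero _) hSfpos.ne', Real.log_exp]
  have hlogg : ∀ y, Real.log (softmax g y) = g y - Real.log Sg := by
    intro y
    show Real.log (Real.exp (g y) / Sg) = _
    rw [Real.log_div (Real.exp_ne_zero _) hSgpos.ne', Real.log_exp]
  have hsum1 : ∑ y : Y, softmax f y = 1 := by
    simp only [hpf, div_eq_mul_inv, ← Finset.sum_mul]
    exact mul_inv_cancel₀ hSfpos.ne'
  have hlogS : |Real.log Sf - Real.log Sg| ≤ ε := by
    rw [abs_le]
    constructor
    · have : Sg ≤ Real.exp ε * Sf := by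
        rw [hSf, hSg, Finset.mul_sum]
        apply Finset.sum_le_sum
        intro y _
        rw [← Real.exp_add, Real.exp_le_exp]
        have := (abs_le.mp (h y)).1
        linarith
      have := Real.log_le_log hSgpos this
      rw [Real.log_mul (Real.exp_ne_zero _) hSfpos.ne', Real.log_exp] at this
      linarith
    · have : Sf ≤ Real.exp ε * Sg := by
        rw [hSf, hSg, Finset.mul_sum]
        apply Finset.sum_le_sum
        intro y _
        rw [← Real.exp_add, Real.exp_le_exp]
        have := (abs_le.mp (h y)).2
        linarith
      have := Real.log_le_log hSfpos this
      rw [Real.log_mul (Real.exp_ne_zero _) hSgpos.ne', Real.log_exp] at this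
      linarith
  have key : ∀ y, Real.log (softmax f y) - Real.log (softmax g y) ≤ 2 * ε := by
    intro y
    rw [hlogf, hlogg]
    have h1 := (abs_le.mp (h y)).2
    have h2 := (abs_le.mp hlogS).1
    linarith
  have hstep : ∑ y : Y, softmax f y * (Real.log (softmax f y) - Real.log (softmax g y))
      ≤ 2 * ε := by
    calc ∑ y : Y, softmax f y * (Real.log (softmax f y) - Real.log (softmax g y))
        ≤ ∑ y : Y, softmax f y * (2 * ε) := by
          apply Finset.sum_le_sum
          intro y _
          exact mul_le_mul_of_nonneg_left (key y)
            (div_nonneg (Real.exp_pos _).le hSfpos.le)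
      _ = 2 * ε := by rw [← Finset.sum_mul, hsum1, one_mul]
  have : ∑ y : Y, softmax f y * (Real.log (softmax f y) - Real.log (softmax g y))
      = (∑ y : Y, softmax f y * Real.log (softmax f y))
        - ∑ y : Y, softmax f y * Real.log (softmax g y) := by
    rw [← Finset.sum_sub_distrib]
    congr 1; ext y; ring
  linarith
end

section
/- Let Y be a nonempty finite type and let f, g : Y → ℝ be two score functions with |f(y) − g(y)| ≤ ε for every y ∈ Y, where ε ≥ 0. Let p_f and p_g be the associated softmax distributions, p_f(y) = exp(f(y)) / ∑_{y'} exp(f(y')) and p_g(y) = exp(g(y)) / ∑_{y'} exp(g(y')). Then the Kullback–Leibler divergence from p_g to p_f is bounded by twice the sup-norm score gap: D_KL(p_f ‖ p_g) = ∑_{y ∈ Y} p_f(y) · log(p_f(y)/p_g(y)) ≤ 2ε. -/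
open Finset

/-- If two score functions `f, g` satisfy `|f y - g y| ≤ ε` for all `y`, then the
Kullback–Leibler divergence from the softmax of `g` to the softmax of `f` is at most `2 ε`. -/
theorem klDiv_softmax_le_two_eps {Y : Type*} [Fintype Y] [Nonempty Y]
    (f g : Y → ℝ) (ε : ℝ) (hε : 0 ≤ ε) (h : ∀ y : Y, |f y - g y| ≤ ε) :
    ∑ y : Y, softmax f y * Real.log (softmax f y / softmax g y) ≤ 2 * ε := by
  set Sf := ∑ y' : Y, Real.exp (f y') with hSf
  set Sg := ∑ y' : Y, Real.exp (g y') with hSg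
  have hSfpos : 0 < Sf := Finset.sum_pos (fun y _ => Real.exp_pos _) Finset.univ_nonempty
  have hSgpos : 0 < Sg := Finset.sum_pos (fun y _ => Real.exp_pos _) Finset.univ_nonempty
  have hlog : Real.log Sg - Real.log Sf ≤ ε := by
    have hle : Sg ≤ Real.exp ε * Sf := by
      rw [hSg, hSf, Finset.mul_sum]
      refine Finset.sum_le_sum fun y _ => ?_
      rw [← Real.exp_add]
      exact Real.exp_le_exp.mpr (by have := abs_le.mp (h y); linarith)
    have := Real.log_le_log hSgpos hle
    rw [Real.log_mul (Real.exp_pos ε).ne' hSfpos.ne', Real.log_exp] at this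
    linarith
  have hterm : ∀ y : Y, softmax f y * Real.log (softmax f y / softmax g y)
      ≤ softmax f y * (2 * ε) := by
    intro y
    apply mul_le_mul_of_nonneg_left _ (div_nonneg (Real.exp_pos _).le hSfpos.le)
    have heq : softmax f y / softmax g y = Real.exp (f y) / Real.exp (g y) * (Sg / Sf) := by
      unfold softmax
      field_simp
      ring
    rw [heq, Real.log_mul (by positivity) (by positivity),
      Real.log_div (Real.exp_pos _).ne' (Real.exp_pos _).ne',
      Real.log_div hSgpos.ne' hSfpos.ne', Real.log_exp, Real.log_exp]
    have := abs_le.mp (h y)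
    linarith
  calc ∑ y : Y, softmax f y * Real.log (softmax f y / softmax g y)
      ≤ ∑ y : Y, softmax f y * (2 * ε) := Finset.sum_le_sum fun y _ => hterm y
    _ = (∑ y : Y, softmax f y) * (2 * ε) := by rw [← Finset.sum_mul]
    _ = 2 * ε := by
        have : ∑ y : Y, softmax f y = 1 := by
          unfold softmax
          rw [← Finset.sum_div, div_self hSfpos.ne']
        rw [this, one_mul]
end

section
/- Fix a sequence length n ≥ 1, a number of labels m ≥ 1, a hidden dimension d ≥ 1, and a fixed matrix of hidden vectors H ∈ ℝ^{n×d}. For parameters W ∈ ℝ^{d×m}, A ∈ ℝ^{m×m}, define the CRF score s_{W,A}(y) = ∑_{i=0}^{n−1} (H·W)_{i, y(i)} + ∑_{i=0}^{n−2} A_{y(i), y(i+1)} over label sequences y : Fin n → Fin m, and the CRF label distribution p_{W,A}(y) = exp(s_{W,A}(y)) / ∑_{y'} exp(s_{W,A}(y')), where the sum ranges over all m^n label sequences. Then there exists a constant c ≥ 0, depending only on H, n, m, and d (and not on the parameter matrices), such that for all parameter pairs (W^s, A^s) and (W^t, A^t), the Kullback–Leibler divergence satisfies D_KL(p_{W^s,A^s}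 ‖ p_{W^t,A^t}) ≤ c · (‖W^s − W^t‖_F² + ‖A^s − A^t‖_F²)^{1/2}. -/
open Finset

/-- The linear-chain CRF score of a label sequence `y : Fin n → Fin m`, given hidden
vectors `H : ℝ^{n×d}`, emission parameters `W : ℝ^{d×m}` and transition parameters
`A : ℝ^{m×m}`:  `s(y) = ∑_{i<n} (H⬝W)_{i, y i} + ∑_{i<n-1} A_{y i, y (i+1)}`. -/
noncomputable def crfScore {n m d : ℕ} (H : Matrix (Fin n) (Fin d) ℝ)
    (W : Matrix (Fin d) (Fin m) ℝ) (A : Matrix (Fin m) (Fin m) ℝ)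
    (y : Fin n → Fin m) : ℝ :=
  (∑ i : Fin n, (H * W) i (y i)) +
    ∑ i : Fin (n - 1), A (y ⟨i, by have := i.isLt; omega⟩) (y ⟨i + 1, by have := i.isLt; omega⟩)

/-- The CRF label distribution: the softmax of the CRF score over all `m^n` label
sequences. -/
noncomputable def crfProb {n m d : ℕ} (H : Matrix (Fin n) (Fin d) ℝ)
    (W : Matrix (Fin d) (Fin m) ℝ) (A : Matrix (Fin m) (Fin m) ℝ)
    (y : Fin n → Fin m) : ℝ :=
  Real.exp (crfScore H W A y) / ∑ y' : Fin n → Fin m, Real.exp (crfScore H W A y')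

/-- There is a constant `c ≥ 0`, depending only on the fixed hidden vectors `H` (and the
dimensions), such that for all parameter pairs, the KL divergence between the two CRF
label distributions is bounded by `c` times the square root of the sum of squared
Frobenius norms of the parameter differences. -/
theorem klDiv_crfProb_le {n m d : ℕ} (hn : 1 ≤ n) (hm : 1 ≤ m) (hd : 1 ≤ d)
    (H : Matrix (Fin n) (Fin d) ℝ) :
    ∃ c : ℝ, 0 ≤ c ∧
      ∀ (Ws Wt : Matrix (Fin d) (Fin m) ℝ) (As At : Matrix (Fin m) (Fin m) ℝ),
        ∑ y : Fin n → Fin m,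
            crfProb H Ws As y * Real.log (crfProb H Ws As y / crfProb H Wt At y) ≤
          c * Real.sqrt ((∑ i : Fin d, ∑ j : Fin m, (Ws i j - Wt i j) ^ 2) +
                 ∑ i : Fin m, ∑ j : Fin m, (As i j - At i j) ^ 2) := by
  classical
  have hmne : Nonempty (Fin m) := ⟨⟨0, hm⟩⟩
  set K : ℝ := (∑ i : Fin n, ∑ k : Fin d, |H i k|) + n with hKdef
  have hK0 : 0 ≤ K := by positivity
  refine ⟨2 * K, by positivity, ?_⟩
  intro Ws Wt As At
  set Q : ℝ := (∑ i : Fin d, ∑ j : Fin m, (Ws i j - Wt i j) ^ 2) +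
      ∑ i : Fin m, ∑ j : Fin m, (As i j - At i j) ^ 2 with hQdef
  have hQ0 : 0 ≤ Q := by positivity
  set S : ℝ := Real.sqrt Q with hSdef
  have hS0 : 0 ≤ S := Real.sqrt_nonneg _
  -- entrywise bounds
  have hW : ∀ k j, |Ws k j - Wt k j| ≤ S := by
    intro k j
    rw [hSdef, ← Real.sqrt_sq_eq_abs]
    apply Real.sqrt_le_sqrt
    rw [hQdef]
    have h1 : (Ws k j - Wt k j) ^ 2 ≤ ∑ i : Fin d, ∑ j' : Fin m, (Ws i j' - Wt i j') ^ 2 := by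
      calc (Ws k j - Wt k j) ^ 2 ≤ ∑ j' : Fin m, (Ws k j' - Wt k j') ^ 2 :=
            Finset.single_le_sum (f := fun j' => (Ws k j' - Wt k j') ^ 2)
              (fun _ _ => by positivity) (Finset.mem_univ j)
        _ ≤ ∑ i : Fin d, ∑ j' : Fin m, (Ws i j' - Wt i j') ^ 2 :=
            Finset.single_le_sum (f := fun i => ∑ j' : Fin m, (Ws i j' - Wt i j') ^ 2)
              (fun _ _ => by positivity) (Finset.mem_univ k)
    nlinarith [Finset.sum_nonneg (fun (i : Fin m) (_ : i ∈ Finset.univ) =>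
      Finset.sum_nonneg (fun (j' : Fin m) (_ : j' ∈ Finset.univ) => sq_nonneg (As i j' - At i j')))]
  have hA : ∀ i j, |As i j - At i j| ≤ S := by
    intro k j
    rw [hSdef, ← Real.sqrt_sq_eq_abs]
    apply Real.sqrt_le_sqrt
    rw [hQdef]
    have h1 : (As k j - At k j) ^ 2 ≤ ∑ i : Fin m, ∑ j' : Fin m, (As i j' - At i j') ^ 2 := by
      calc (As k j - At k j) ^ 2 ≤ ∑ j' : Fin m, (As k j' - At k j') ^ 2 :=
            Finset.single_le_sum (f := fun j' => (As k j' - At k j') ^ 2)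
              (fun _ _ => by positivity) (Finset.mem_univ j)
        _ ≤ ∑ i : Fin m, ∑ j' : Fin m, (As i j' - At i j') ^ 2 :=
            Finset.single_le_sum (f := fun i => ∑ j' : Fin m, (As i j' - At i j') ^ 2)
              (fun _ _ => by positivity) (Finset.mem_univ k)
    nlinarith [Finset.sum_nonneg (fun (i : Fin d) (_ : i ∈ Finset.univ) =>
      Finset.sum_nonneg (fun (j' : Fin m) (_ : j' ∈ Finset.univ) => sq_nonneg (Ws i j' - Wt i j')))]
  -- score difference bound
  have hδ : ∀ y : Fin n → Fin m, |crfScore H Ws As y - crfScore H Wt At y| ≤ K * S := by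
    intro y
    have hexpand : crfScore H Ws As y - crfScore H Wt At y =
        (∑ i : Fin n, ∑ k : Fin d, H i k * (Ws k (y i) - Wt k (y i))) +
        ∑ i : Fin (n - 1), (As (y ⟨i, by have := i.isLt; omega⟩) (y ⟨i + 1, by have := i.isLt; omega⟩)
          - At (y ⟨i, by have := i.isLt; omega⟩) (y ⟨i + 1, by have := i.isLt; omega⟩)) := by
      simp only [crfScore, Matrix.mul_apply, mul_sub, Finset.sum_sub_distrib]
      ring
    rw [hexpand]
    have h1 : |∑ i : Fin n, ∑ k : Fin d, H i k * (Ws k (y i) - Wt k (y i))| ≤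
        (∑ i : Fin n, ∑ k : Fin d, |H i k|) * S := by
      calc |∑ i : Fin n, ∑ k : Fin d, H i k * (Ws k (y i) - Wt k (y i))|
          ≤ ∑ i : Fin n, |∑ k : Fin d, H i k * (Ws k (y i) - Wt k (y i))| :=
            Finset.abs_sum_le_sum_abs _ _
        _ ≤ ∑ i : Fin n, ∑ k : Fin d, |H i k| * S := by
            apply Finset.sum_le_sum
            intro i _
            calc |∑ k : Fin d, H i k * (Ws k (y i) - Wt k (y i))|
                ≤ ∑ k : Fin d, |H i k * (Ws k (y i) - Wt k (y i))| :=
                  Finset.abs_sum_le_sum_abs _ _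
              _ ≤ ∑ k : Fin d, |H i k| * S := by
                  apply Finset.sum_le_sum
                  intro k _
                  rw [abs_mul]
                  exact mul_le_mul_of_nonneg_left (hW k (y i)) (abs_nonneg _)
        _ = (∑ i : Fin n, ∑ k : Fin d, |H i k|) * S := by rw [Finset.sum_mul]; simp [Finset.sum_mul]
    have h2 : |∑ i : Fin (n - 1), (As (y ⟨i, by have := i.isLt; omega⟩) (y ⟨i + 1, by have := i.isLt; omega⟩)
          - At (y ⟨i, by have := i.isLt; omega⟩) (y ⟨i + 1, by have := i.isLt; omega⟩))| ≤ (n : ℝ) * S := by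
      calc |∑ i : Fin (n - 1), (As (y ⟨i, by have := i.isLt; omega⟩) (y ⟨i + 1, by have := i.isLt; omega⟩)
          - At (y ⟨i, by have := i.isLt; omega⟩) (y ⟨i + 1, by have := i.isLt; omega⟩))|
          ≤ ∑ i : Fin (n - 1), |As (y ⟨i, by have := i.isLt; omega⟩) (y ⟨i + 1, by have := i.isLt; omega⟩)
          - At (y ⟨i, by have := i.isLt; omega⟩) (y ⟨i + 1, by have := i.isLt; omega⟩)| :=
            Finset.abs_sum_le_sum_abs _ _
        _ ≤ ∑ _i : Fin (n - 1), S := Finset.sum_le_sum (fun i _ => hA _ _)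
        _ = ((n : ℝ) - 1) * S := by
            rw [Finset.sum_const, Finset.card_univ, Fintype.card_fin, nsmul_eq_mul]
            congr 1
            have : (1 : ℕ) ≤ n := hn
            push_cast [Nat.cast_sub this]
            ring
        _ ≤ (n : ℝ) * S := by nlinarith
    calc |_ + _| ≤ _ + _ := abs_add_le _ _
      _ ≤ (∑ i : Fin n, ∑ k : Fin d, |H i k|) * S + (n : ℝ) * S := add_le_add h1 h2
      _ = K * S := by rw [hKdef]; ring
  -- set up partition functions
  set fs : (Fin n → Fin m) → ℝ := fun y => Real.exp (crfScore H Ws As y) with hfs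
  set ft : (Fin n → Fin m) → ℝ := fun y => Real.exp (crfScore H Wt At y) with hft
  set Zs : ℝ := ∑ y : Fin n → Fin m, fs y with hZs
  set Zt : ℝ := ∑ y : Fin n → Fin m, ft y with hZt
  have hZs0 : 0 < Zs := Finset.sum_pos (fun y _ => Real.exp_pos _) ⟨Classical.arbitrary _, Finset.mem_univ _⟩
  have hZt0 : 0 < Zt := Finset.sum_pos (fun y _ => Real.exp_pos _) ⟨Classical.arbitrary _, Finset.mem_univ _⟩
  have hps : ∀ y, crfProb H Ws As y = fs y / Zs := fun y => rfl
  have hpt : ∀ y, crfProb H Wt At y = ft y / Zt := fun y => rfl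
  have hlog : ∀ y : Fin n → Fin m, Real.log (crfProb H Ws As y / crfProb H Wt At y) =
      (crfScore H Ws As y - crfScore H Wt At y) + (Real.log Zt - Real.log Zs) := by
    intro y
    rw [hps, hpt]
    rw [div_div_div_comm]
    rw [Real.log_div (by positivity) (by positivity),
        Real.log_div (Real.exp_ne_zero _) (Real.exp_ne_zero _),
        Real.log_div (ne_of_gt hZs0) (ne_of_gt hZt0),
        Real.log_exp, Real.log_exp]
    ring
  have hsum1 : ∑ y : Fin n → Fin m, crfProb H Ws As y = 1 := by
    simp only [hps]
    rw [← Finset.sum_div, ← hZs, div_self (ne_of_gt hZs0)]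
  have hp0 : ∀ y, 0 ≤ crfProb H Ws As y := by
    intro y; rw [hps]; positivity
  -- rewrite KL
  have hKL : ∑ y : Fin n → Fin m,
      crfProb H Ws As y * Real.log (crfProb H Ws As y / crfProb H Wt At y) =
      (∑ y : Fin n → Fin m, crfProb H Ws As y * (crfScore H Ws As y - crfScore H Wt At y))
        + (Real.log Zt - Real.log Zs) := by
    calc ∑ y : Fin n → Fin m,
          crfProb H Ws As y * Real.log (crfProb H Ws As y / crfProb H Wt At y)
        = ∑ y : Fin n → Fin m, (crfProb H Ws As y * (crfScore H Ws As y - crfScore H Wt At y)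
            + crfProb H Ws As y * (Real.log Zt - Real.log Zs)) := by
          apply Finset.sum_congr rfl
          intro y _
          rw [hlog y]; ring
      _ = (∑ y : Fin n → Fin m, crfProb H Ws As y * (crfScore H Ws As y - crfScore H Wt At y))
            + (∑ y : Fin n → Fin m, crfProb H Ws As y) * (Real.log Zt - Real.log Zs) := by
          rw [Finset.sum_add_distrib, Finset.sum_mul]
      _ = _ := by rw [hsum1]; ring
  rw [hKL]
  have hterm1 : (∑ y : Fin n → Fin m, crfProb H Ws As y * (crfScore H Ws As y - crfScore H Wt At y))
      ≤ K * S := by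
    calc (∑ y : Fin n → Fin m, crfProb H Ws As y * (crfScore H Ws As y - crfScore H Wt At y))
        ≤ ∑ y : Fin n → Fin m, crfProb H Ws As y * (K * S) := by
          apply Finset.sum_le_sum
          intro y _
          exact mul_le_mul_of_nonneg_left ((le_abs_self _).trans (hδ y)) (hp0 y)
      _ = K * S := by rw [← Finset.sum_mul, hsum1, one_mul]
  have hterm2 : Real.log Zt - Real.log Zs ≤ K * S := by
    have hZle : Zt ≤ Zs * Real.exp (K * S) := by
      rw [hZt, hZs, Finset.sum_mul]
      apply Finset.sum_le_sum
      intro y _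
      rw [hfs, hft, ← Real.exp_add]
      apply Real.exp_le_exp.2
      have := (abs_le.1 (hδ y)).1
      linarith
    have h := Real.log_le_log hZt0 hZle
    rw [Real.log_mul (ne_of_gt hZs0) (Real.exp_ne_zero _), Real.log_exp] at h
    linarith
  calc _ ≤ K * S + K * S := add_le_add hterm1 hterm2
    _ = 2 * K * S := by ring
end

section
/- Let Y be a nonempty finite type, let E be a finite-dimensional real inner product space, and let φ : Y → E be a feature map with ‖φ(y)‖ ≤ B for all y ∈ Y, where B ≥ 0. For a parameter θ ∈ E define the linear score s_θ(y) = ⟪θ, φ(y)⟫ and the softmax distribution p_θ(y) = exp(s_θ(y)) / ∑_{y'} exp(s_θ(y')). Then for any two parameters θ^s, θ^t ∈ E, the Kullback–Leibler divergence satisfies D_KL(p_{θ^s} ‖ p_{θ^t}) ≤ 2B · ‖θ^s − θ^t‖. -/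
open Finset
open scoped RealInnerProductSpace

/-- The exponential-family (linear) softmax distribution with parameter `θ` and
feature map `φ`. -/
noncomputable def linearSoftmax {Y : Type*} [Fintype Y] {E : Type*}
    [NormedAddCommGroup E] [InnerProductSpace ℝ E] (φ : Y → E) (θ : E) (y : Y) : ℝ :=
  Real.exp ⟪θ, φ y⟫ / ∑ y' : Y, Real.exp ⟪θ, φ y'⟫

/-- If the feature map is bounded by `B`, then the KL divergence between the linear
softmax distributions at parameters `θˢ` and `θᵗ` is at most `2 B ‖θˢ - θᵗ‖`. -/
theorem klDiv_linearSoftmax_le {Y : Type*} [Fintype Y] [Nonempty Y]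
    {E : Type*} [NormedAddCommGroup E] [InnerProductSpace ℝ E] [FiniteDimensional ℝ E]
    (φ : Y → E) (B : ℝ) (hB : 0 ≤ B) (hφ : ∀ y : Y, ‖φ y‖ ≤ B) (θs θt : E) :
    ∑ y : Y, linearSoftmax φ θs y *
        Real.log (linearSoftmax φ θs y / linearSoftmax φ θt y) ≤
      2 * B * ‖θs - θt‖ := by
  classical
  set ss : Y → ℝ := fun y => ⟪θs, φ y⟫ with hss
  set st : Y → ℝ := fun y => ⟪θt, φ y⟫ with hst
  set Zs : ℝ := ∑ y : Y, Real.exp (ss y) with hZs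
  set Zt : ℝ := ∑ y : Y, Real.exp (st y) with hZt
  have hZs0 : 0 < Zs := Finset.sum_pos (fun y _ => Real.exp_pos _) Finset.univ_nonempty
  have hZt0 : 0 < Zt := Finset.sum_pos (fun y _ => Real.exp_pos _) Finset.univ_nonempty
  set c : ℝ := B * ‖θs - θt‖ with hc
  have hc0 : 0 ≤ c := mul_nonneg hB (norm_nonneg _)
  have hdiff : ∀ y : Y, |ss y - st y| ≤ c := by
    intro y
    have h1 : ss y - st y = ⟪θs - θt, φ y⟫ := (inner_sub_left _ _ _).symm
    rw [h1]
    calc |⟪θs - θt, φ y⟫| ≤ ‖θs - θt‖ * ‖φ y‖ := abs_real_inner_le_norm _ _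
      _ ≤ ‖θs - θt‖ * B := mul_le_mul_of_nonneg_left (hφ y) (norm_nonneg _)
      _ = c := mul_comm _ _
  have hlogZ : Real.log Zt - Real.log Zs ≤ c := by
    have hle : Zt ≤ Real.exp c * Zs := by
      rw [hZt, hZs, Finset.mul_sum]
      refine Finset.sum_le_sum fun y _ => ?_
      rw [← Real.exp_add]
      exact Real.exp_le_exp.mpr (by linarith [(abs_le.mp (hdiff y)).1])
    have := Real.log_le_log hZt0 hle
    rw [Real.log_mul (Real.exp_ne_zero _) hZs0.ne', Real.log_exp] at this
    linarith
  have hp_pos : ∀ y : Y, 0 ≤ linearSoftmax φ θs y := fun y =>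
    le_of_lt (div_pos (Real.exp_pos _) hZs0)
  have hsum1 : ∑ y : Y, linearSoftmax φ θs y = 1 := by
    simp only [linearSoftmax, ← Finset.sum_div]
    exact div_self hZs0.ne'
  have hrw : ∀ y : Y,
      Real.log (linearSoftmax φ θs y / linearSoftmax φ θt y)
        = (ss y - st y) + (Real.log Zt - Real.log Zs) := by
    intro y
    have h1 : linearSoftmax φ θs y ≠ 0 := (div_pos (Real.exp_pos _) hZs0).ne'
    have h2 : linearSoftmax φ θt y ≠ 0 := (div_pos (Real.exp_pos _) hZt0).ne'
    rw [Real.log_div h1 h2]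
    unfold linearSoftmax
    rw [Real.log_div (Real.exp_ne_zero _) hZs0.ne',
      Real.log_div (Real.exp_ne_zero _) hZt0.ne', Real.log_exp, Real.log_exp]
    ring
  calc ∑ y : Y, linearSoftmax φ θs y *
        Real.log (linearSoftmax φ θs y / linearSoftmax φ θt y)
      ≤ ∑ y : Y, linearSoftmax φ θs y * (2 * c) := by
        refine Finset.sum_le_sum fun y _ => ?_
        rw [hrw y]
        refine mul_le_mul_of_nonneg_left ?_ (hp_pos y)
        have := (abs_le.mp (hdiff y)).2
        linarith
    _ = 2 * c := by rw [← Finset.sum_mul, hsum1, one_mul]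
    _ = 2 * B * ‖θs - θt‖ := by rw [hc]; ring
end
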